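/- If A and B are positive semidefinite s×s matrices with A ≥ B (Loewner order), then sqrt(A) ≥ sqrt(B), i.e., the matrix square root is operator monotone. -/

import Mathlib

open Matrix
open scoped ComplexOrder

noncomputable def Matrix.PosSemidef.sqrt {𝕜 : Type*} [RCLike 𝕜] {n : Type*} [Fintype n]
    [DecidableEq n] {A : Matrix n n 𝕜} (hA : A.PosSemidef) : Matrix n n 𝕜 :=
  hA.1.eigenvectorUnitary.1 * diagonal ((↑) ∘ (√·) ∘ hA.1.eigenvalues) *
  (star hA.1.eigenvectorUnitary : Matrix n n 𝕜)

theorem sqrt_psd_aux {s : ℕ} {A : Matrix (Fin s) (Fin s) ℂ} (hA : A.PosSemidef) :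
    hA.sqrt.PosSemidef := by
  unfold Matrix.PosSemidef.sqrt
  have hD : (diagonal ((↑) ∘ (√·) ∘ hA.1.eigenvalues : Fin s → ℂ)).PosSemidef :=
    posSemidef_diagonal_iff.mpr (fun i => by
      simp only [Function.comp_apply]; exact_mod_cast Real.sqrt_nonneg _)
  simpa [star_eq_conjTranspose] using hD.mul_mul_conjTranspose_same hA.1.eigenvectorUnitary.1

theorem sqrt_mul_self_aux {s : ℕ} {A : Matrix (Fin s) (Fin s) ℂ} (hA : A.PosSemidef) :
    hA.sqrt * hA.sqrt = A := by
  unfold Matrix.PosSemidef.sqrt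
  conv_rhs => rw [hA.1.spectral_theorem, Unitary.conjStarAlgAut_apply]
  have hU : (star hA.1.eigenvectorUnitary : Matrix (Fin s) (Fin s) ℂ) * hA.1.eigenvectorUnitary.1 = 1 :=
    Unitary.coe_star_mul_self _
  have hDD : diagonal ((↑) ∘ (√·) ∘ hA.1.eigenvalues : Fin s → ℂ) *
      diagonal ((↑) ∘ (√·) ∘ hA.1.eigenvalues : Fin s → ℂ) =
      diagonal (RCLike.ofReal ∘ hA.1.eigenvalues) := by
    rw [diagonal_mul_diagonal]
    congr 1; funext i
    simp only [Function.comp_apply]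
    rw [← Complex.ofReal_mul, Real.mul_self_sqrt (hA.eigenvalues_nonneg i)]
    rfl
  calc _ = hA.1.eigenvectorUnitary.1 * (diagonal ((↑) ∘ (√·) ∘ hA.1.eigenvalues : Fin s → ℂ) *
      ((star hA.1.eigenvectorUnitary : Matrix (Fin s) (Fin s) ℂ) * hA.1.eigenvectorUnitary.1) *
      diagonal ((↑) ∘ (√·) ∘ hA.1.eigenvalues : Fin s → ℂ)) *
      (star hA.1.eigenvectorUnitary : Matrix (Fin s) (Fin s) ℂ) := by
        simp only [Matrix.mul_assoc]; rfl
    _ = _ := by rw [hU, Matrix.mul_one, hDD]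

theorem matrix_sqrt_operator_monotone
    {s : ℕ} (A B : Matrix (Fin s) (Fin s) ℂ)
    (hA : A.PosSemidef) (hB : B.PosSemidef)
    (hAB : (A - B).PosSemidef) :
    (hA.sqrt - hB.sqrt).PosSemidef := by
  set X := hA.sqrt with hXdef
  set Y := hB.sqrt with hYdef
  have hXps : X.PosSemidef := sqrt_psd_aux hA
  have hYps : Y.PosSemidef := sqrt_psd_aux hB
  have hXX : X * X = A := sqrt_mul_self_aux hA
  have hYY : Y * Y = B := sqrt_mul_self_aux hB
  have hM : (X - Y).IsHermitian := hXps.1.sub hYps.1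
  apply hM.posSemidef_iff_eigenvalues_nonneg.mpr
  intro i; show (0 : ℝ) ≤ hM.eigenvalues i
  by_contra hneg
  push_neg at hneg
  set lam : ℝ := hM.eigenvalues i with hlam
  set v : Fin s → ℂ := ⇑(hM.eigenvectorBasis i) with hvdef
  have hv0 : v ≠ 0 := by
    have := hM.eigenvectorBasis.toBasis.ne_zero i
    simpa [hvdef, OrthonormalBasis.coe_toBasis] using
      fun h : v = 0 => this (by ext j; exact congrFun h j)
  have hev : (X - Y) *ᵥ v = (lam : ℂ) • v := by
    have := hM.mulVec_eigenvectorBasis i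
    rw [← hvdef] at this
    rw [this]
    ext j
    simp [Pi.smul_apply, Complex.real_smul, hlam]
  -- key identity: (X+Y)(X-Y) + (X-Y)(X+Y) = 2(A-B)
  have hkey : (X + Y) * (X - Y) + (X - Y) * (X + Y) = (2 : ℂ) • (A - B) := by
    rw [← hXX, ← hYY, two_smul]
    noncomm_ring
  -- quadratic forms
  have hq : star v ⬝ᵥ ((X + Y) * (X - Y) + (X - Y) * (X + Y)) *ᵥ v
      = (2 * lam : ℂ) * (star v ⬝ᵥ (X + Y) *ᵥ v) := by
    rw [add_mulVec, dotProduct_add]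
    have h1 : star v ⬝ᵥ ((X + Y) * (X - Y)) *ᵥ v
        = (lam : ℂ) * (star v ⬝ᵥ (X + Y) *ᵥ v) := by
      rw [← mulVec_mulVec, hev, mulVec_smul, dotProduct_smul, smul_eq_mul]
    have h2 : star v ⬝ᵥ ((X - Y) * (X + Y)) *ᵥ v
        = (lam : ℂ) * (star v ⬝ᵥ (X + Y) *ᵥ v) := by
      rw [← mulVec_mulVec, dotProduct_mulVec]
      have : star v ᵥ* (X - Y) = (lam : ℂ) • star v := by
        have := congrArg star hev
        rw [star_mulVec, hM.eq] at this
        rw [this]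
        ext j
        simp [mul_comm]
      rw [this, smul_dotProduct, smul_eq_mul]
    rw [h1, h2]
    ring
  have hd : (0 : ℂ) ≤ star v ⬝ᵥ (A - B) *ᵥ v := hAB.dotProduct_mulVec_nonneg v
  have hqS : (0 : ℂ) ≤ star v ⬝ᵥ (X + Y) *ᵥ v := (hXps.add hYps).dotProduct_mulVec_nonneg v
  have h2d : star v ⬝ᵥ ((2 : ℂ) • (A - B)) *ᵥ v = 2 * (star v ⬝ᵥ (A - B) *ᵥ v) := by
    rw [smul_mulVec, dotProduct_smul, smul_eq_mul]
  have hmain : (2 * lam : ℂ) * (star v ⬝ᵥ (X + Y) *ᵥ v) = 2 * (star v ⬝ᵥ (A - B) *ᵥ v) := by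
    rw [← hq, hkey, h2d]
  -- since lam < 0 and q ≥ 0, we get q = 0
  set q : ℂ := star v ⬝ᵥ (X + Y) *ᵥ v with hqdef
  have hq0 : q = 0 := by
    by_contra hne
    have hqpos : 0 < q := lt_of_le_of_ne hqS (Ne.symm hne)
    have hlt : (2 * (lam : ℂ)) * q < 0 := by
      apply mul_neg_of_neg_of_pos _ hqpos
      have h : (2 * lam : ℝ) < 0 := by linarith
      calc (2 : ℂ) * (lam : ℂ) = ((2 * lam : ℝ) : ℂ) := by push_cast; ring
        _ < 0 := by exact_mod_cast h
    have hge : (0 : ℂ) ≤ (2 * (lam : ℂ)) * q := by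
      rw [hmain]
      have : (0 : ℂ) ≤ (2 : ℂ) := by norm_num
      exact mul_nonneg this hd
    exact hlt.not_ge hge
  -- q = 0 means Xv = 0 and Yv = 0
  have hsplit : star v ⬝ᵥ X *ᵥ v + star v ⬝ᵥ Y *ᵥ v = 0 := by
    rw [← dotProduct_add, ← add_mulVec]; exact hq0
  have hXv0 : star v ⬝ᵥ X *ᵥ v = 0 := by
    have h1 := hXps.dotProduct_mulVec_nonneg v
    have h2 := hYps.dotProduct_mulVec_nonneg v
    have := add_eq_zero_iff_of_nonneg h1 h2 |>.mp hsplit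
    exact this.1
  have hYv0 : star v ⬝ᵥ Y *ᵥ v = 0 := by
    have h1 := hXps.dotProduct_mulVec_nonneg v
    have h2 := hYps.dotProduct_mulVec_nonneg v
    exact (add_eq_zero_iff_of_nonneg h1 h2 |>.mp hsplit).2
  have hXv : X *ᵥ v = 0 := (hXps.dotProduct_mulVec_zero_iff v).mp hXv0
  have hYv : Y *ᵥ v = 0 := (hYps.dotProduct_mulVec_zero_iff v).mp hYv0
  have : (lam : ℂ) • v = 0 := by
    rw [← hev, sub_mulVec, hXv, hYv, sub_zero]
  have hlam0 : (lam : ℂ) = 0 := by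
    rcases smul_eq_zero.mp this with h | h
    · exact h
    · exact absurd h hv0
  have : lam = 0 := by exact_mod_cast hlam0
  linarith
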